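/- Let R be a standard graded Cohen–Macaulay algebra of dimension d ≥ 1 over a field k, with homogeneous maximal ideal 𝔪 and a-invariant a, and let J be an ideal generated by a linear system of parameters. Then for all integers i and all j ≥ a + d, one has J^i : 𝔪^j = J^{i-j+a+d} : 𝔪^{a+d}. -/

import Mathlib

namespace QRaux

open MvPolynomial

variable {R : Type*} [CommRing R] {N : ℕ}

def Jc (y : Fin N → R) (c : ℕ) : Ideal R := Ideal.span (y '' {i : Fin N | (i : ℕ) < c})

def VltP (c : ℕ) (F : MvPolynomial (Fin N) R) : Prop :=
  ∀ k : Fin N →₀ ℕ, coeff k F ≠ 0 → ∀ i : Fin N, c ≤ (i : ℕ) → k i = 0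

variable (y : Fin N → R)

lemma y_mem_Jc {c : ℕ} {i : Fin N} (h : (i : ℕ) < c) : y i ∈ Jc y c :=
  Ideal.subset_span ⟨i, h, rfl⟩

lemma Jc_mono {c c' : ℕ} (h : c ≤ c') : Jc y c ≤ Jc y c' :=
  Ideal.span_mono (Set.image_mono fun _ hi => lt_of_lt_of_le hi h)

lemma degU (k : Fin N →₀ ℕ) : k.degree = ∑ i, k i :=
  Finset.sum_subset (Finset.subset_univ _) (fun i _ hi => Finsupp.notMem_support_iff.mp hi)

lemma hg_deg {F : MvPolynomial (Fin N) R} {n : ℕ} (h : F.IsHomogeneous n)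
    {k : Fin N →₀ ℕ} (hk : coeff k F ≠ 0) : ∑ i, k i = n := by
  rw [← degU, Finsupp.degree_eq_weight_one]
  exact h hk

lemma isHomogeneous_of {F : MvPolynomial (Fin N) R} {n : ℕ}
    (h : ∀ k : Fin N →₀ ℕ, coeff k F ≠ 0 → ∑ i, k i = n) : F.IsHomogeneous n := by
  intro k hk
  change (Finsupp.weight (fun _ => 1)) k = n
  rw [← Finsupp.degree_eq_weight_one, degU]
  exact h k hk

lemma prod_mem {c : ℕ} (k : Fin N →₀ ℕ) (hk : ∀ i : Fin N, c ≤ (i : ℕ) → k i = 0) :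
    (∏ i, y i ^ k i) ∈ Jc y c ^ (∑ i, k i) := by
  classical
  have H : ∀ s : Finset (Fin N), (∏ i ∈ s, y i ^ k i) ∈ Jc y c ^ (∑ i ∈ s, k i) := by
    intro s
    induction s using Finset.induction_on with
    | empty => simp [Ideal.one_eq_top]
    | insert _ _ hne ih =>
      rename_i a s
      rw [Finset.prod_insert hne, Finset.sum_insert hne, pow_add]
      refine Ideal.mul_mem_mul ?_ ih
      by_cases hka : k a = 0
      · simp [hka, Ideal.one_eq_top]
      · have ha : (a : ℕ) < c := by
          by_contra hac
          exact hka (hk a (le_of_not_gt hac))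
        exact Ideal.pow_mem_pow (y_mem_Jc y ha) _
  exact H Finset.univ

lemma eval_mem {c n : ℕ} {F : MvPolynomial (Fin N) R} (hF : F.IsHomogeneous n) (hV : VltP c F) :
    eval y F ∈ Jc y c ^ n := by
  rw [eval_eq']
  refine Ideal.sum_mem _ fun k hk => ?_
  have hc : coeff k F ≠ 0 := mem_support_iff.mp hk
  rw [← hg_deg hF hc]
  exact Ideal.mul_mem_left _ _ (prod_mem y k (hV k hc))

lemma eval_mem' {c n : ℕ} {F : MvPolynomial (Fin N) R} (hF : F.IsHomogeneous n) (hV : VltP c F)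
    (hco : ∀ k, coeff k F ∈ Jc y c) :
    eval y F ∈ Jc y c ^ (n + 1) := by
  rw [eval_eq']
  refine Ideal.sum_mem _ fun k hk => ?_
  have hc : coeff k F ≠ 0 := mem_support_iff.mp hk
  rw [pow_succ']
  refine Ideal.mul_mem_mul (hco k) ?_
  rw [← hg_deg hF hc]
  exact prod_mem y k (hV k hc)

lemma key_cancel (k : Fin N →₀ ℕ) (i : Fin N) (h : k i ≠ 0) :
    (k - Finsupp.single i 1) + Finsupp.single i 1 = k := by
  apply tsub_add_cancel_of_le
  rw [Finsupp.single_le_iff]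
  omega

lemma prod_add (m e : Fin N →₀ ℕ) :
    (∏ j, y j ^ (m + e) j) = (∏ j, y j ^ m j) * ∏ j, y j ^ e j := by
  rw [← Finset.prod_mul_distrib]
  exact Finset.prod_congr rfl fun j _ => by rw [Finsupp.add_apply, pow_add]

lemma prod_single_one (i : Fin N) : (∏ j, y j ^ (Finsupp.single i 1 : Fin N →₀ ℕ) j) = y i := by
  rw [Finset.prod_eq_single i]
  · simp
  · intro j _ hj
    rw [Finsupp.single_apply, if_neg (fun h => hj h.symm), pow_zero]
  · simp

lemma prod_sub_single (k : Fin N →₀ ℕ) (i : Fin N) (h : k i ≠ 0) :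
    y i * ∏ j, y j ^ ((k - Finsupp.single i 1 : Fin N →₀ ℕ) j) = ∏ j, y j ^ k j := by
  conv_rhs => rw [← key_cancel k i h]
  rw [prod_add, prod_single_one, mul_comm]

lemma sum_add (m e : Fin N →₀ ℕ) : (∑ j, (m + e) j) = (∑ j, m j) + ∑ j, e j := by
  rw [← Finset.sum_add_distrib]
  exact Finset.sum_congr rfl fun j _ => by rw [Finsupp.add_apply]

lemma sum_single_one (i : Fin N) : (∑ j, (Finsupp.single i 1 : Fin N →₀ ℕ) j) = 1 := by
  simp [Finsupp.single_apply]

lemma sum_sub_single (k : Fin N →₀ ℕ) (i : Fin N) (h : k i ≠ 0) :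
    (∑ j, ((k - Finsupp.single i 1 : Fin N →₀ ℕ) j)) + 1 = ∑ j, k j := by
  conv_rhs => rw [← key_cancel k i h]
  rw [sum_add, sum_single_one]

lemma fprod (k : Fin N →₀ ℕ) : (k.prod fun i e => y i ^ e) = ∏ i, y i ^ k i :=
  Finsupp.prod_fintype _ _ (fun _ => pow_zero _)


lemma VltP_C {c : ℕ} (r : R) : VltP c (C r : MvPolynomial (Fin N) R) := by
  intro k hk i _
  rw [coeff_C] at hk
  by_cases h : k = 0
  · simp [h]
  · simp [if_neg (Ne.symm h)] at hk

lemma VltP_zero {c : ℕ} : VltP c (0 : MvPolynomial (Fin N) R) := by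
  intro k hk
  simp at hk

lemma VltP_add {c : ℕ} {F G : MvPolynomial (Fin N) R} (hF : VltP c F) (hG : VltP c G) :
    VltP c (F + G) := by
  intro k hk i hi
  rw [coeff_add] at hk
  by_cases h : coeff k F = 0
  · exact hG k (by intro h2; rw [h, h2] at hk; simp at hk) i hi
  · exact hF k h i hi

lemma VltP_sub {c : ℕ} {F G : MvPolynomial (Fin N) R} (hF : VltP c F) (hG : VltP c G) :
    VltP c (F - G) := by
  intro k hk i hi
  rw [coeff_sub] at hk
  by_cases h : coeff k F = 0
  · exact hG k (by intro h2; rw [h, h2] at hk; simp at hk) i hi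
  · exact hF k h i hi

lemma VltP_C_mul {c : ℕ} {F : MvPolynomial (Fin N) R} (hF : VltP c F) (r : R) :
    VltP c (C r * F) := by
  intro k hk i hi
  rw [coeff_C_mul] at hk
  exact hF k (fun h => hk (by rw [h, mul_zero])) i hi

lemma VltP_mul_X {c : ℕ} {F : MvPolynomial (Fin N) R} (hV : VltP c F) {i : Fin N}
    (hi : (i : ℕ) < c) : VltP c (F * X i) := by
  classical
  intro k hk j hj
  rw [coeff_mul_X'] at hk
  by_cases hmem : i ∈ k.support
  · rw [if_pos hmem] at hk
    have h0 : ((k - Finsupp.single i 1 : Fin N →₀ ℕ) j) = 0 := hV _ hk j hj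
    have hne : j ≠ i := fun h => absurd (h ▸ hj) (by omega)
    rw [Finsupp.tsub_apply, Finsupp.single_apply, if_neg (fun h => hne h.symm)] at h0
    omega
  · rw [if_neg hmem] at hk
    exact absurd rfl hk

lemma IsHomogeneous_C_mul {n : ℕ} {F : MvPolynomial (Fin N) R} (hF : F.IsHomogeneous n) (r : R) :
    (C r * F).IsHomogeneous n := by
  simpa using (isHomogeneous_C (Fin N) r).mul hF

lemma rep {c : ℕ} : ∀ {n : ℕ} {z : R}, z ∈ Jc y c ^ n →
    ∃ F : MvPolynomial (Fin N) R, F.IsHomogeneous n ∧ VltP c F ∧ eval y F = z := by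
  intro n
  induction n with
  | zero =>
    intro z _
    exact ⟨C z, isHomogeneous_C _ _, VltP_C z, eval_C z⟩
  | succ n ih =>
    intro z hz
    rw [pow_succ] at hz
    refine Submodule.mul_induction_on hz ?_ ?_
    · intro b hb a ha
      obtain ⟨F, hF, hV, hE⟩ := ih hb
      induction ha using Submodule.span_induction with
      | mem x hx =>
        obtain ⟨i, hi, rfl⟩ := hx
        exact ⟨F * X i, hF.mul (isHomogeneous_X _ _), VltP_mul_X hV hi,
          by rw [map_mul, eval_X, hE]⟩
      | zero => exact ⟨0, isHomogeneous_zero _ _ _, VltP_zero, by simp⟩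
      | add u v _ _ ihu ihv =>
        obtain ⟨Fu, h1, h2, h3⟩ := ihu
        obtain ⟨Fv, h4, h5, h6⟩ := ihv
        exact ⟨Fu + Fv, h1.add h4, VltP_add h2 h5, by rw [map_add, h3, h6, mul_add]⟩
      | smul r x _ ihx =>
        obtain ⟨G, h1, h2, h3⟩ := ihx
        refine ⟨C r * G, IsHomogeneous_C_mul h1 r, VltP_C_mul h2 r, ?_⟩
        rw [map_mul, eval_C, h3, smul_eq_mul]
        ring
    · intro u v ihu ihv
      obtain ⟨Fu, h1, h2, h3⟩ := ihu
      obtain ⟨Fv, h4, h5, h6⟩ := ihv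
      exact ⟨Fu + Fv, h1.add h4, VltP_add h2 h5, by rw [map_add, h3, h6]⟩


lemma exists_sub {c n : ℕ} {F : MvPolynomial (Fin N) R} (hF : F.IsHomogeneous n) (hV : VltP c F)
    (h : eval y F ∈ Jc y c ^ (n + 1)) :
    ∃ F', F'.IsHomogeneous n ∧ VltP c F' ∧ eval y F' = 0 ∧
      ∀ k, coeff k F - coeff k F' ∈ Jc y c := by
  classical
  obtain ⟨G, hG, hGV, hGE⟩ := rep y h
  have hex : ∀ k ∈ G.support, ∃ i : Fin N, k i ≠ 0 := by
    intro k hk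
    by_contra hcon
    push_neg at hcon
    have hd := hg_deg hG (mem_support_iff.mp hk)
    simp only [hcon] at hd
    simp at hd
  choose pick hpick using hex
  have hpicklt : ∀ (k) (hk : k ∈ G.support), ((pick k hk : Fin N) : ℕ) < c := by
    intro k hk
    by_contra hge
    exact hpick k hk (hGV k (mem_support_iff.mp hk) _ (le_of_not_gt hge))
  set T : MvPolynomial (Fin N) R := ∑ k ∈ G.support.attach,
    monomial (k.1 - Finsupp.single (pick k.1 k.2) 1) (coeff k.1 G * y (pick k.1 k.2)) with hT
  have hThom : T.IsHomogeneous n := by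
    rw [hT]
    refine IsHomogeneous.sum _ _ _ fun k _ => isHomogeneous_monomial _ ?_
    rw [degU]
    have h1 := sum_sub_single k.1 (pick k.1 k.2) (hpick k.1 k.2)
    have h2 := hg_deg hG (mem_support_iff.mp k.2)
    omega
  have hTV : VltP c T := by
    intro m hm j hj
    rw [hT, coeff_sum] at hm
    obtain ⟨k, -, hk⟩ := Finset.exists_ne_zero_of_sum_ne_zero hm
    rw [coeff_monomial] at hk
    by_cases he : k.1 - Finsupp.single (pick k.1 k.2) 1 = m
    · have hkj : k.1 j = 0 := hGV k.1 (mem_support_iff.mp k.2) j hj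
      rw [← he, Finsupp.tsub_apply, hkj]
      simp
    · rw [if_neg he] at hk
      exact absurd rfl hk
  have hTco : ∀ m, coeff m T ∈ Jc y c := by
    intro m
    rw [hT, coeff_sum]
    refine Ideal.sum_mem _ fun k _ => ?_
    rw [coeff_monomial]
    split
    · exact Ideal.mul_mem_left _ _ (y_mem_Jc y (hpicklt k.1 k.2))
    · exact Ideal.zero_mem _
  have hTeval : eval y T = eval y G := by
    rw [hT, map_sum]
    conv_rhs => rw [eval_eq' y G, ← Finset.sum_attach G.support fun k => coeff k G * ∏ i, y i ^ k i]
    refine Finset.sum_congr rfl fun k _ => ?_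
    rw [eval_monomial, fprod, mul_assoc, prod_sub_single y k.1 (pick k.1 k.2) (hpick k.1 k.2)]
  refine ⟨F - T, hF.sub hThom, VltP_sub hV hTV, ?_, ?_⟩
  · rw [map_sub, hTeval, hGE, sub_self]
  · intro k
    rw [coeff_sub, sub_sub_cancel]
    exact hTco k

lemma coeff_zero_eval {F : MvPolynomial (Fin N) R}
    (hsupp : ∀ k : Fin N →₀ ℕ, coeff k F ≠ 0 → k = 0) :
    eval y F = coeff 0 F := by
  have hFC : F = C (coeff 0 F) := by
    ext m
    rw [coeff_C]
    by_cases hm : m = 0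
    · subst hm; rw [if_pos rfl]
    · rw [if_neg (fun h => hm h.symm)]
      by_contra hc
      exact hm (hsupp m hc)
  conv_lhs => rw [hFC]
  rw [eval_C]

theorem Zmain (hreg : ∀ (c : ℕ) (hc : c < N), ∀ u : R, y ⟨c, hc⟩ * u ∈ Jc y c → u ∈ Jc y c) :
    ∀ c : ℕ, c ≤ N → ∀ (n : ℕ) (F : MvPolynomial (Fin N) R),
      F.IsHomogeneous n → VltP c F → eval y F = 0 → ∀ k, coeff k F ∈ Jc y c := by
  intro c
  induction c with
  | zero =>
    intro _ n F hF hV hE k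
    by_cases hk : coeff k F = 0
    · rw [hk]; exact Ideal.zero_mem _
    · exfalso
      have hall : ∀ m : Fin N →₀ ℕ, coeff m F ≠ 0 → m = 0 := by
        intro m hm
        ext i
        exact hV m hm i (Nat.zero_le _)
      have h0 := coeff_zero_eval y hall
      rw [hE] at h0
      have : k = 0 := hall k hk
      rw [this] at hk
      exact hk h0.symm
  | succ c ihc =>
    intro hcN
    have hcN' : c ≤ N := Nat.le_of_succ_le hcN
    have hcltN : c < N := hcN
    -- Q at level c (all degrees)
    have Qc : ∀ (m : ℕ) (F : MvPolynomial (Fin N) R), F.IsHomogeneous m → VltP c F →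
        eval y F ∈ Jc y c ^ (m + 1) → ∀ k, coeff k F ∈ Jc y c := by
      intro m F hF hV hIn k
      obtain ⟨F', hF', hV', hE', hsub⟩ := exists_sub y hF hV hIn
      have h1 := ihc hcN' m F' hF' hV' hE' k
      have h2 := hsub k
      have : coeff k F = (coeff k F - coeff k F') + coeff k F' := by ring
      rw [this]
      exact add_mem h2 h1
    -- colon lemma at level c
    have L5 : ∀ (m : ℕ) (u : R), y ⟨c, hcltN⟩ * u ∈ Jc y c ^ m → u ∈ Jc y c ^ m := by
      intro m
      induction m with
      | zero => intro u _; simp [Ideal.one_eq_top]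
      | succ m ihm =>
        intro u hu
        have hu' : u ∈ Jc y c ^ m := ihm u (Ideal.pow_le_pow_right (Nat.le_succ m) hu)
        obtain ⟨H, hH, hHV, hHE⟩ := rep y hu'
        have hin : eval y (C (y ⟨c, hcltN⟩) * H) ∈ Jc y c ^ (m + 1) := by
          rw [map_mul, eval_C, hHE]; exact hu
        have hco := Qc m (C (y ⟨c, hcltN⟩) * H) (IsHomogeneous_C_mul hH _)
          (VltP_C_mul hHV _) hin
        have hcoH : ∀ k, coeff k H ∈ Jc y c := by
          intro k
          have := hco k
          rw [coeff_C_mul] at this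
          exact hreg c hcltN _ this
        rw [← hHE]
        exact eval_mem' y hH hHV hcoH
    intro n
    induction n with
    | zero =>
      intro F hF hV hE k
      by_cases hk : coeff k F = 0
      · rw [hk]; exact Ideal.zero_mem _
      · exfalso
        have hall : ∀ m : Fin N →₀ ℕ, coeff m F ≠ 0 → m = 0 := by
          intro m hm
          have := hg_deg hF hm
          ext i
          have hnn : ∀ j : Fin N, 0 ≤ m j := fun j => Nat.zero_le _
          have : m i = 0 := by
            by_contra hmi
            have h1 : 0 < ∑ j, m j := by
              refine Finset.sum_pos' (fun j _ => Nat.zero_le _) ⟨i, Finset.mem_univ i, ?_⟩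
              omega
            omega
          exact this
        have h0 := coeff_zero_eval y hall
        rw [hE] at h0
        rw [hall k hk] at hk
        exact hk h0.symm
    | succ n ihn =>
      intro F hF hV hE k
      set zi : Fin N := ⟨c, hcltN⟩ with hzi
      set e : Fin N →₀ ℕ := Finsupp.single zi 1 with he
      set H := F.divMonomial e with hHdef
      set G := F.modMonomial e with hGdef
      have hFGH : (monomial e 1 : MvPolynomial (Fin N) R) * H + G = F :=
        divMonomial_add_modMonomial F e
      have hcoH : ∀ m : Fin N →₀ ℕ, coeff m H = coeff (e + m) F := fun m =>
        coeff_divMonomial e F m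
      have hH : H.IsHomogeneous n := by
        refine isHomogeneous_of ?_
        intro m hm
        rw [hcoH] at hm
        have := hg_deg hF hm
        rw [sum_add e m, sum_single_one zi] at this
        omega
      have hHV : VltP (c + 1) H := by
        intro m hm i hi
        rw [hcoH] at hm
        have h1 := hV _ hm i hi
        rw [Finsupp.add_apply] at h1
        omega
      have hGco : ∀ m : Fin N →₀ ℕ, coeff m G ≠ 0 → (¬ e ≤ m) ∧ coeff m G = coeff m F := by
        intro m hm
        by_cases hle : e ≤ m
        · exact absurd (coeff_modMonomial_of_le F hle) hm
        · exact ⟨hle, coeff_modMonomial_of_not_le F hle⟩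
      have hGzi : ∀ m : Fin N →₀ ℕ, coeff m G ≠ 0 → m zi = 0 := by
        intro m hm
        have h1 := (hGco m hm).1
        rw [he, Finsupp.single_le_iff] at h1
        omega
      have hG : G.IsHomogeneous (n + 1) := by
        refine isHomogeneous_of fun m hm => ?_
        rw [(hGco m hm).2] at hm
        exact hg_deg hF hm
      have hGV : VltP c G := by
        intro m hm i hi
        by_cases hic : (i : ℕ) = c
        · have : i = zi := Fin.ext hic
          rw [this]; exact hGzi m hm
        · have h1 : c + 1 ≤ (i : ℕ) := by omega
          have h2 := (hGco m hm).2
          rw [h2] at hm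
          exact hV m hm i h1
      have hevalsplit : y zi * eval y H + eval y G = 0 := by
        have h0 := congrArg (eval y) hFGH
        rw [map_add, map_mul, eval_monomial, one_mul] at h0
        have hprod : (e.prod fun i k => y i ^ k) = y zi := by
          rw [show (e.prod fun i k => y i ^ k) = ∏ j, y j ^ e j from
            Finsupp.prod_fintype _ _ (fun _ => pow_zero _)]
          exact prod_single_one y zi
        rw [hprod] at h0
        rw [h0]
        exact hE
      have hGmem : eval y G ∈ Jc y c ^ (n + 1) := eval_mem y hG hGV
      have hzH : y zi * eval y H ∈ Jc y c ^ (n + 1) := by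
        have h1 : y zi * eval y H = - eval y G := by linear_combination hevalsplit
        rw [h1]
        exact neg_mem hGmem
      have hHmem : eval y H ∈ Jc y c ^ (n + 1) := L5 (n + 1) _ hzH
      -- coefficients of H are in Jc (c+1), using inner IH via the trick
      have hcoHJ : ∀ m, coeff m H ∈ Jc y (c + 1) := by
        intro m
        have hHmem' : eval y H ∈ Jc y (c + 1) ^ (n + 1) :=
          Ideal.pow_right_mono (Jc_mono y (Nat.le_succ c)) (n + 1) hHmem
        obtain ⟨H', h1, h2, h3, h4⟩ := exists_sub y hH hHV hHmem'
        have h5 := ihn H' h1 h2 h3 m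
        have : coeff m H = (coeff m H - coeff m H') + coeff m H' := by ring
        rw [this]
        exact add_mem (h4 m) h5
      -- coefficients of G
      obtain ⟨P, hP, hPV, hPE⟩ := rep y (neg_mem hHmem : - eval y H ∈ Jc y c ^ (n + 1))
      have hW : eval y (G - C (y zi) * P) = 0 := by
        rw [map_sub, map_mul, eval_C, hPE]
        linear_combination hevalsplit
      have hWhom : (G - C (y zi) * P).IsHomogeneous (n + 1) :=
        hG.sub (IsHomogeneous_C_mul hP _)
      have hWV : VltP c (G - C (y zi) * P) := VltP_sub hGV (VltP_C_mul hPV _)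
      have hWco := ihc hcN' (n + 1) _ hWhom hWV hW
      have hGcoJ : ∀ m, coeff m G ∈ Jc y (c + 1) := by
        intro m
        have h1 := hWco m
        rw [coeff_sub, coeff_C_mul] at h1
        have h2 : coeff m G = (coeff m G - y zi * coeff m P) + y zi * coeff m P := by ring
        rw [h2]
        refine add_mem (Jc_mono y (Nat.le_succ c) h1) ?_
        exact Ideal.mul_mem_right _ _ (y_mem_Jc y (show ((zi : Fin N) : ℕ) < c + 1 from Nat.lt_succ_self c))
      -- conclude for F
      by_cases hek : e ≤ k
      · have h1 : e + (k - e) = k := add_tsub_cancel_of_le hek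
        have h2 : coeff k F = coeff (k - e) H := by rw [hcoH, h1]
        rw [h2]
        exact hcoHJ _
      · have h2 : coeff k G = coeff k F := coeff_modMonomial_of_not_le F hek
        rw [← h2]
        exact hGcoJ k

lemma VltP_top (F : MvPolynomial (Fin N) R) : VltP N F := by
  intro k _ i hi
  exact absurd i.2 (by omega)

lemma Qmain (hreg : ∀ (c : ℕ) (hc : c < N), ∀ u : R, y ⟨c, hc⟩ * u ∈ Jc y c → u ∈ Jc y c)
    {n : ℕ} {F : MvPolynomial (Fin N) R} (hF : F.IsHomogeneous n)
    (h : eval y F ∈ Jc y N ^ (n + 1)) : ∀ k, coeff k F ∈ Jc y N := by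
  intro k
  obtain ⟨F', h1, h2, h3, h4⟩ := exists_sub y hF (VltP_top F) h
  have h5 := Zmain y hreg N le_rfl n F' h1 h2 h3 k
  have : coeff k F = (coeff k F - coeff k F') + coeff k F' := by ring
  rw [this]
  exact add_mem (h4 k) h5

lemma step_up (hreg : ∀ (c : ℕ) (hc : c < N), ∀ u : R, y ⟨c, hc⟩ * u ∈ Jc y c → u ∈ Jc y c)
    (hN : 0 < N) {m : ℕ} {u : R} (hu : u ∈ Jc y N ^ m)
    (h2 : u * y ⟨0, hN⟩ ∈ Jc y N ^ (m + 2)) : u ∈ Jc y N ^ (m + 1) := by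
  obtain ⟨F, hF, hV, hE⟩ := rep y hu
  set i0 : Fin N := ⟨0, hN⟩ with hi0
  have hmul : (F * X i0).IsHomogeneous (m + 1) := hF.mul (isHomogeneous_X R i0)
  have heval : eval y (F * X i0) ∈ Jc y N ^ ((m + 1) + 1) := by
    rw [map_mul, eval_X, hE]
    exact h2
  have hco := Qmain y hreg hmul heval
  have hcoF : ∀ k, coeff k F ∈ Jc y N := by
    intro k
    have := hco (k + Finsupp.single i0 1)
    rwa [coeff_mul_X k i0 F] at this
  rw [← hE]
  exact eval_mem' y hF hV hcoF

lemma colon_y0 (hreg : ∀ (c : ℕ) (hc : c < N), ∀ u : R, y ⟨c, hc⟩ * u ∈ Jc y c → u ∈ Jc y c)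
    (hN : 0 < N) : ∀ (m : ℕ) (u : R), u * y ⟨0, hN⟩ ∈ Jc y N ^ (m + 1) → u ∈ Jc y N ^ m := by
  intro m
  induction m with
  | zero => intro u _; simp [Ideal.one_eq_top]
  | succ m ihm =>
    intro u hu
    have h1 : u ∈ Jc y N ^ m := ihm u (Ideal.pow_le_pow_right (Nat.le_succ _) hu)
    exact step_up y hreg hN h1 hu

lemma Jc_top {d : ℕ} (y : Fin d → R) : Jc y d = Ideal.span (Set.range y) := by
  unfold Jc
  congr 1
  ext x
  constructor
  · rintro ⟨i, -, rfl⟩; exact ⟨i, rfl⟩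
  · rintro ⟨i, rfl⟩; exact ⟨i, i.2, rfl⟩

lemma hreg_of_regular {d : ℕ} (y : Fin d → R)
    (hyreg : RingTheory.Sequence.IsRegular R (List.ofFn y)) :
    ∀ (c : ℕ) (hc : c < d), ∀ u : R, y ⟨c, hc⟩ * u ∈ Jc y c → u ∈ Jc y c := by
  intro c hc u hu
  have hlen : c < (List.ofFn y).length := by simpa using hc
  have h := hyreg.toIsWeaklyRegular.regular_mod_prev c hlen
  have hideal : (Ideal.ofList ((List.ofFn y).take c) • ⊤ : Submodule R R) = Jc y c := by
    rw [Ideal.smul_eq_mul, Ideal.mul_top]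
    show Ideal.span _ = _
    unfold Jc
    congr 1
    rw [← Fin.ofFn_take_eq_take_ofFn (le_of_lt hc) y]
    ext x
    simp only [Set.mem_setOf_eq, List.mem_ofFn, Set.mem_range, Set.mem_image]
    constructor
    · rintro ⟨i, rfl⟩
      exact ⟨Fin.castLE (le_of_lt hc) i, by simpa using i.2, rfl⟩
    · rintro ⟨i, hi, rfl⟩
      exact ⟨⟨(i : ℕ), by simpa using hi⟩, rfl⟩
  have hel : (List.ofFn y)[c]'hlen = y ⟨c, hc⟩ := by
    simp [List.getElem_ofFn]
  rw [hel, hideal] at h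
  have hmk : y ⟨c, hc⟩ • (Submodule.Quotient.mk u : R ⧸ (Jc y c : Submodule R R)) =
      y ⟨c, hc⟩ • (0 : R ⧸ (Jc y c : Submodule R R)) := by
    rw [smul_zero, ← Submodule.Quotient.mk_smul, smul_eq_mul, Submodule.Quotient.mk_eq_zero]
    exact hu
  have := h hmk
  rwa [Submodule.Quotient.mk_eq_zero] at this

end QRaux



/-- Integer power of an ideal; by convention nonpositive exponents give the unit ideal. -/
def ipow {R : Type*} [CommRing R] (I : Ideal R) (n : ℤ) : Ideal R := I ^ n.toNat

/-- **Remark 2.2**: Let `R` be a standard graded Cohen–Macaulay algebra of dimension `d ≥ 1`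
over a field `k`, with homogeneous maximal ideal `𝔪` and `a`-invariant `a`, and let `J` be an
ideal generated by a linear system of parameters.  Then for all integers `i` and all
`j ≥ a + d` one has `J^i : 𝔪^j = J^(i-j+a+d) : 𝔪^(a+d)`. -/
theorem statement_1
    {k R : Type*} [Field k] [CommRing R] [Algebra k R] [IsNoetherianRing R]
    -- `R` is standard graded over `k`:
    (𝒜 : ℤ → Submodule k R) [GradedAlgebra 𝒜]
    (hneg : ∀ i : ℤ, i < 0 → 𝒜 i = ⊥)
    (hstd : ∀ i : ℤ, 0 ≤ i → 𝒜 (i + 1) = 𝒜 1 * 𝒜 i)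
    -- `R` has dimension `d ≥ 1`:
    (d : ℕ) (hd : 1 ≤ d) (hdim : ringKrullDim R = d)
    -- `𝔪` is the homogeneous maximal ideal:
    (𝔪 : Ideal R) (h𝔪 : 𝔪 = Ideal.span (𝒜 1 : Set R))
    -- `y` is a linear system of parameters; its regularity encodes that `R` is Cohen–Macaulay:
    (y : Fin d → R) (hy1 : ∀ t, y t ∈ 𝒜 1)
    (hyreg : RingTheory.Sequence.IsRegular R (List.ofFn y))
    (J : Ideal R) (hJ : J = Ideal.span (Set.range y))
    (hsop : 𝔪 ≤ J.radical)
    -- `a` is the `a`-invariant of `R`, characterized by the reduction number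
    -- `r_J(𝔪) = a + d`:
    (a : ℤ) (ha : 0 ≤ a + d)
    (hred : ∀ n : ℤ, a + d ≤ n → ipow 𝔪 (n + 1) = J * ipow 𝔪 n)
    (hmin : ¬ ipow 𝔪 (a + d) = J * ipow 𝔪 (a + d - 1))
    (i j : ℤ) (hj : a + d ≤ j) :
    Submodule.colon (ipow J i) (ipow 𝔪 j)
      = Submodule.colon (ipow J (i - j + a + d)) (ipow 𝔪 (a + d)) := by
  have hreg := QRaux.hreg_of_regular y hyreg
  have hJc : QRaux.Jc y d = J := by rw [QRaux.Jc_top, hJ]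
  have hN : 0 < d := hd
  have hcolon : ∀ (m : ℕ) (u : R), u * y ⟨0, hN⟩ ∈ J ^ (m + 1) → u ∈ J ^ m := by
    rw [← hJc]; exact QRaux.colon_y0 y hreg hN
  have hy0J : y ⟨0, hN⟩ ∈ J := by
    rw [hJ]; exact Ideal.subset_span ⟨_, rfl⟩
  set s : ℕ := (a + d).toNat with hs
  have hsz : ((s : ℤ)) = a + d := Int.toNat_of_nonneg ha
  -- nat version of the reduction relation
  have hrednat : ∀ m : ℕ, s ≤ m → 𝔪 ^ (m + 1) = J * 𝔪 ^ m := by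
    intro m hm
    have h1 : a + (d : ℤ) ≤ (m : ℤ) := by omega
    have h2 := hred m h1
    simpa [ipow, show ((m : ℤ) + 1).toNat = m + 1 by omega, Int.toNat_natCast] using h2
  have hpow : ∀ p : ℕ, 𝔪 ^ (p + s) = J ^ p * 𝔪 ^ s := by
    intro p
    induction p with
    | zero => simp
    | succ p ih =>
      have : p + 1 + s = (p + s) + 1 := by omega
      rw [this, hrednat (p + s) (by omega), ih, pow_succ]
      ring
  by_cases hi : i ≤ 0
  · have h1 : i.toNat = 0 := by omega
    have h2 : (i - j + a + d).toNat = 0 := by omega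
    show Submodule.colon (J ^ i.toNat) _ = Submodule.colon (J ^ (i - j + a + d).toNat) _
    rw [h1, h2]
    have : ∀ (P : Ideal R), Submodule.colon (J ^ 0 : Ideal R) P = ⊤ := by
      intro P
      rw [eq_top_iff]
      intro x _
      rw [Submodule.mem_colon]
      intro p hp
      simp [Ideal.one_eq_top]
    rw [this, this]
  · push_neg at hi
    by_cases hi' : i - j + a + d ≤ 0
    · have h2 : (i - j + a + d).toNat = 0 := by omega
      show Submodule.colon (J ^ i.toNat) ((𝔪 ^ j.toNat : Ideal R) : Set R) = Submodule.colon (J ^ (i - j + a + d).toNat) _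
      rw [h2]
      have hrhs : ∀ (P : Ideal R), Submodule.colon ((J : Ideal R) ^ 0) P = ⊤ := by
        intro P
        rw [eq_top_iff]
        intro x _
        rw [Submodule.mem_colon]
        intro p hp
        simp [Ideal.one_eq_top]
      rw [hrhs]
      -- show LHS = ⊤ : 𝔪^j.toNat ≤ J^i.toNat
      rw [eq_top_iff]
      intro x _
      rw [Submodule.mem_colon]
      intro p hp
      set q : ℕ := (j - (a + d)).toNat with hq
      have hjq : j.toNat = q + s := by omega
      rw [hjq, hpow q] at hp
      have hple : J ^ q * 𝔪 ^ s ≤ J ^ i.toNat := by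
        calc J ^ q * 𝔪 ^ s ≤ J ^ q := Ideal.mul_le_left
          _ ≤ J ^ i.toNat := Ideal.pow_le_pow_right (by omega)
      exact Ideal.mul_mem_left _ x (hple hp)
    · push_neg at hi'
      set p : ℕ := (j - (a + d)).toNat with hp
      set n : ℕ := (i - j + a + d).toNat with hn
      have hIn : i.toNat = n + p := by omega
      have hjn : j.toNat = p + s := by omega
      have key : ∀ q : ℕ, Submodule.colon ((J : Ideal R) ^ (n + q)) ((𝔪 ^ (q + s) : Ideal R) : Set R)
          = Submodule.colon ((J : Ideal R) ^ n) ((𝔪 ^ s : Ideal R) : Set R) := by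
        intro q
        induction q with
        | zero => simp
        | succ q ihq =>
          rw [← ihq]
          have hm : 𝔪 ^ (q + 1 + s) = J * 𝔪 ^ (q + s) := by
            have h1 : q + 1 + s = (q + s) + 1 := by omega
            rw [h1, hrednat (q + s) (by omega)]
          apply le_antisymm
          · intro x hx
            rw [Submodule.mem_colon] at hx ⊢
            intro w hw
            have h1 : x • (y ⟨0, hN⟩ * w) ∈ J ^ (n + (q + 1)) := by
              apply hx
              rw [hm]
              exact Ideal.mul_mem_mul hy0J hw
            rw [smul_eq_mul] at h1 ⊢
            apply hcolon (n + q) (x * w)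
            have : x * w * y ⟨0, hN⟩ = x * (y ⟨0, hN⟩ * w) := by ring
            rw [this]
            have he : n + (q + 1) = (n + q) + 1 := by omega
            rwa [he] at h1
          · intro x hx
            rw [Submodule.mem_colon] at hx ⊢
            intro w hw
            rw [hm] at hw
            rw [smul_eq_mul]
            refine Submodule.mul_induction_on hw ?_ ?_
            · intro b hb m hmm
              have h2 : x * m ∈ J ^ (n + q) := by
                have := hx m hmm
                rwa [smul_eq_mul] at this
              have h3 : b * (x * m) ∈ J ^ (n + (q + 1)) := by
                have he : n + (q + 1) = 1 + (n + q) := by omega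
                rw [he, pow_add, pow_one]
                exact Ideal.mul_mem_mul hb h2
              have : x * (b * m) = b * (x * m) := by ring
              rwa [this]
            · intro v w' hv hw'
              have : x * (v + w') = x * v + x * w' := by ring
              rw [this]
              exact add_mem hv hw'
      show Submodule.colon (J ^ i.toNat) ((𝔪 ^ j.toNat : Ideal R) : Set R) = Submodule.colon (J ^ (i - j + a + d).toNat) ((𝔪 ^ (a + d).toNat : Ideal R) : Set R)
      rw [hIn, hjn]
      exact key p
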